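/- Let r_i = (1/i) · Σ_{j | i} μ(i/j) · 2^j be the Witt numbers (μ the Möbius function), let a_n = Σ_{i=1}^n r_i and b_n = Σ_{i=1}^n a_i. Then limsup_{n→∞} b_n / b_{n-1} ≥ 2. -/

import Mathlib

open scoped ArithmeticFunction

/-- The Witt numbers `r i = (1/i) Σ_{j ∣ i} μ(i/j) 2^j`. -/
noncomputable def witt (i : ℕ) : ℝ :=
  (1 / (i : ℝ)) * ∑ j ∈ i.divisors, ((ArithmeticFunction.moebius (i / j) : ℤ) : ℝ) * 2 ^ j

/-- `a_n = r_1 + ⋯ + r_n`. -/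
noncomputable def wittA (n : ℕ) : ℝ := ∑ i ∈ Finset.Icc 1 n, witt i

/-- `b_n = a_1 + ⋯ + a_n`. -/
noncomputable def wittB (n : ℕ) : ℝ := ∑ i ∈ Finset.Icc 1 n, wittA i

lemma witt_key {i : ℕ} (hi : 1 ≤ i) :
    |(i:ℝ) * witt i - 2^i| ≤ 2^(i/2+1) - 1 := by
  have hi0 : (i:ℝ) ≠ 0 := Nat.cast_ne_zero.mpr (by omega)
  have hmul : (i:ℝ) * witt i
      = ∑ j ∈ i.divisors, ((ArithmeticFunction.moebius (i / j) : ℤ) : ℝ) * 2 ^ j := by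
    rw [witt]; field_simp
  rw [hmul, ← Nat.insert_self_properDivisors (by omega : i ≠ 0),
    Finset.sum_insert Nat.self_notMem_properDivisors]
  have h1 : ((ArithmeticFunction.moebius (i / i) : ℤ) : ℝ) * 2 ^ i = 2 ^ i := by
    rw [Nat.div_self (by omega), ArithmeticFunction.moebius_apply_one]
    norm_num
  rw [h1, add_sub_cancel_left]
  calc |∑ j ∈ i.properDivisors, ((ArithmeticFunction.moebius (i / j) : ℤ) : ℝ) * 2 ^ j|
      ≤ ∑ j ∈ i.properDivisors, |((ArithmeticFunction.moebius (i / j) : ℤ) : ℝ) * 2 ^ j| :=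
        Finset.abs_sum_le_sum_abs _ _
    _ ≤ ∑ j ∈ i.properDivisors, (2:ℝ) ^ j := by
        apply Finset.sum_le_sum
        intro j _
        rw [abs_mul, abs_pow, abs_two]
        have habs : |((ArithmeticFunction.moebius (i / j) : ℤ) : ℝ)| ≤ 1 := by
          have := ArithmeticFunction.abs_moebius_le_one (n := i / j)
          exact_mod_cast this
        have h2 : (0:ℝ) < 2 ^ j := by positivity
        nlinarith
    _ ≤ ∑ j ∈ Finset.range (i/2+1), (2:ℝ)^j := by
        apply Finset.sum_le_sum_of_subset_of_nonneg
        · intro j hj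
          rw [Nat.mem_properDivisors] at hj
          rw [Finset.mem_range]
          obtain ⟨⟨k, hk⟩, hlt⟩ := hj
          have hk2 : 2 ≤ k := by rcases k with _ | _ | k <;> omega
          have : 2 * j ≤ i := by nlinarith
          omega
        · intros; positivity
    _ = 2^(i/2+1) - 1 := by
        rw [geom_sum_eq (by norm_num : (2:ℝ) ≠ 1)]
        norm_num

lemma witt_key_lower {i : ℕ} (hi : 1 ≤ i) :
    (2:ℝ)^i - 2^(i/2+1) + 1 ≤ (i:ℝ) * witt i := by
  have h := abs_le.mp (witt_key hi)
  linarith [h.1]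

lemma witt_key_upper {i : ℕ} (hi : 1 ≤ i) :
    (i:ℝ) * witt i ≤ 2^(i+1) := by
  have h := abs_le.mp (witt_key hi)
  have hle : (2:ℝ)^(i/2+1) ≤ 2^i := pow_le_pow_right₀ (by norm_num) (by omega)
  have h2 : (2:ℝ)^(i+1) = 2^i * 2 := pow_succ 2 i
  linarith [h.2]

lemma witt_pos {i : ℕ} (hi : 1 ≤ i) : 0 < witt i := by
  have hk := witt_key_lower hi
  have hle : (2:ℝ)^(i/2+1) ≤ 2^i := pow_le_pow_right₀ (by norm_num) (by omega)
  have h : 0 < (i:ℝ) * witt i := by linarith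
  have hi0 : (0:ℝ) < i := by exact_mod_cast (by omega : 0 < i)
  nlinarith [h, hi0]

lemma witt_lower {i : ℕ} (hi : 4 ≤ i) : (2:ℝ)^(i-1) ≤ (i:ℝ) * witt i := by
  have hk := witt_key_lower (by omega : 1 ≤ i)
  have hle : (2:ℝ)^(i/2+1) ≤ 2^(i-1) := pow_le_pow_right₀ (by norm_num) (by omega)
  have h2 : (2:ℝ)^i = 2^(i-1) * 2 := by
    rw [← pow_succ]; congr 1; omega
  linarith

lemma witt_upper {i : ℕ} (hi : 1 ≤ i) : witt i ≤ 2^(i+1) / i := by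
  have hi0 : (0:ℝ) < i := by exact_mod_cast (by omega : 0 < i)
  rw [le_div_iff₀ hi0]
  have := witt_key_upper hi
  linarith [this]

/-- `∑_{i=1}^n 2^i / i ≤ 4 · 2^n / n` for `n ≥ 1`. -/
lemma geom_div_sum_le : ∀ n : ℕ, 1 ≤ n →
    ∑ i ∈ Finset.Icc 1 n, (2:ℝ)^i / i ≤ 4 * 2^n / n := by
  intro n hn
  induction n with
  | zero => omega
  | succ m ih =>
    rcases Nat.lt_or_ge m 2 with hm | hm
    · interval_cases m
      · norm_num
      · rw [Finset.sum_Icc_succ_top (by norm_num : 1 ≤ 1 + 1), Finset.Icc_self,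
          Finset.sum_singleton]
        norm_num
    · have hm1 : 1 ≤ m := by omega
      have ihm := ih hm1
      rw [Finset.sum_Icc_succ_top (by omega : 1 ≤ m + 1)]
      have hm0 : (0:ℝ) < m := by exact_mod_cast (by omega : 0 < m)
      have hm10 : (0:ℝ) < (m:ℝ) + 1 := by linarith
      have hcast : ((m+1 : ℕ):ℝ) = (m:ℝ) + 1 := by push_cast; ring
      rw [hcast]
      have hp : (0:ℝ) < 2^m := by positivity
      have h2 : (2:ℝ)^(m+1) = 2 * 2^m := by rw [pow_succ]; ring
      rw [h2]
      have hm2 : (2:ℝ) ≤ m := by exact_mod_cast hm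
      have hstep : 4 * (2:ℝ)^m / m + 2*2^m/((m:ℝ)+1) ≤ 4*(2*2^m)/((m:ℝ)+1) := by
        rw [div_add_div _ _ (ne_of_gt hm0) (ne_of_gt hm10),
          div_le_div_iff₀ (by positivity) hm10]
        have hkey : (0:ℝ) ≤ 2^m * (((m:ℝ)+1) * (2*(m:ℝ)-4)) :=
          mul_nonneg hp.le (mul_nonneg hm10.le (by linarith))
        nlinarith [hkey]
      linarith

lemma wittA_upper {n : ℕ} (hn : 1 ≤ n) : wittA n ≤ 8 * 2^n / n := by
  have h : wittA n ≤ ∑ i ∈ Finset.Icc 1 n, (2:ℝ)^(i+1) / i := by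
    apply Finset.sum_le_sum
    intro i hi
    exact witt_upper (Finset.mem_Icc.mp hi).1
  have h2 : ∑ i ∈ Finset.Icc 1 n, (2:ℝ)^(i+1) / i
      = 2 * ∑ i ∈ Finset.Icc 1 n, (2:ℝ)^i / i := by
    rw [Finset.mul_sum]
    apply Finset.sum_congr rfl
    intro i _
    rw [pow_succ]; ring
  have h3 := geom_div_sum_le n hn
  have : 2 * (4 * (2:ℝ)^n / n) = 8 * 2^n / n := by ring
  linarith [h, h2 ▸ h, mul_le_mul_of_nonneg_left h3 (by norm_num : (0:ℝ) ≤ 2)]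

lemma wittB_upper {n : ℕ} (hn : 1 ≤ n) : wittB n ≤ 32 * 2^n / n := by
  have h : wittB n ≤ ∑ i ∈ Finset.Icc 1 n, 8 * (2:ℝ)^i / i := by
    apply Finset.sum_le_sum
    intro i hi
    exact wittA_upper (Finset.mem_Icc.mp hi).1
  have h2 : ∑ i ∈ Finset.Icc 1 n, 8 * (2:ℝ)^i / i
      = 8 * ∑ i ∈ Finset.Icc 1 n, (2:ℝ)^i / i := by
    rw [Finset.mul_sum]
    apply Finset.sum_congr rfl
    intro i _
    ring
  have h3 := geom_div_sum_le n hn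
  have h4 : 8 * (4 * (2:ℝ)^n / n) = 32 * 2^n / n := by ring
  calc wittB n ≤ 8 * ∑ i ∈ Finset.Icc 1 n, (2:ℝ)^i / i := by rw [← h2]; exact h
    _ ≤ 8 * (4 * (2:ℝ)^n / n) := mul_le_mul_of_nonneg_left h3 (by norm_num)
    _ = 32 * 2^n / n := h4

lemma wittA_pos {n : ℕ} (hn : 1 ≤ n) : 0 < wittA n := by
  apply Finset.sum_pos
  · intro i hi
    exact witt_pos (Finset.mem_Icc.mp hi).1
  · exact ⟨1, Finset.mem_Icc.mpr ⟨le_refl 1, hn⟩⟩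

lemma wittB_pos {n : ℕ} (hn : 1 ≤ n) : 0 < wittB n := by
  apply Finset.sum_pos
  · intro i hi
    exact wittA_pos (Finset.mem_Icc.mp hi).1
  · exact ⟨1, Finset.mem_Icc.mpr ⟨le_refl 1, hn⟩⟩

lemma wittB_nonneg (n : ℕ) : 0 ≤ wittB n := by
  apply Finset.sum_nonneg
  intro i hi
  exact (wittA_pos (Finset.mem_Icc.mp hi).1).le

lemma witt_le_wittB {n : ℕ} (hn : 1 ≤ n) : witt n ≤ wittB n := by
  have h1 : witt n ≤ wittA n := by
    apply Finset.single_le_sum (f := witt)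
    · intro i hi
      exact (witt_pos (Finset.mem_Icc.mp hi).1).le
    · exact Finset.mem_Icc.mpr ⟨hn, le_refl n⟩
  have h2 : wittA n ≤ wittB n := by
    apply Finset.single_le_sum (f := wittA)
    · intro i hi
      exact (wittA_pos (Finset.mem_Icc.mp hi).1).le
    · exact Finset.mem_Icc.mpr ⟨hn, le_refl n⟩
  linarith

/-- lower bound `wittB n ≥ 2^(n-1)/n` for `n ≥ 4`. -/
lemma wittB_lower {n : ℕ} (hn : 4 ≤ n) : (2:ℝ)^(n-1) / n ≤ wittB n := by
  have h1 := witt_lower hn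
  have h2 := witt_le_wittB (by omega : 1 ≤ n)
  have hn0 : (0:ℝ) < n := by exact_mod_cast (by omega : 0 < n)
  rw [div_le_iff₀ hn0]
  nlinarith

/-- the ratio is eventually bounded above by 256. -/
lemma ratio_bounded {n : ℕ} (hn : 5 ≤ n) : wittB n / wittB (n-1) ≤ 256 := by
  have hpos : 0 < wittB (n-1) := wittB_pos (by omega)
  rw [div_le_iff₀ hpos]
  have hup := wittB_upper (by omega : 1 ≤ n)
  have hlo := wittB_lower (by omega : 4 ≤ n - 1)
  have hn0 : (0:ℝ) < n := by exact_mod_cast (by omega : 0 < n)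
  have hn1 : (0:ℝ) < ((n-1:ℕ):ℝ) := by exact_mod_cast (by omega : 0 < n - 1)
  -- 32 * 2^n / n ≤ 256 * (2^(n-2) / (n-1))
  have hmid : 32 * (2:ℝ)^n / n ≤ 256 * ((2:ℝ)^(n-1-1) / ((n-1:ℕ):ℝ)) := by
    have hpow : (2:ℝ)^n = 2^(n-1-1) * 4 := by
      rw [show (4:ℝ) = 2^2 by norm_num, ← pow_add]
      congr 1
      omega
    have hp : (0:ℝ) < 2^(n-1-1) := by positivity
    have hcast : ((n-1:ℕ):ℝ) = (n:ℝ) - 1 := by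
      push_cast [Nat.cast_sub (by omega : 1 ≤ n)]
      ring
    rw [hpow, ← mul_div_assoc, div_le_div_iff₀ hn0 hn1, hcast]
    nlinarith
  calc wittB n ≤ 32 * 2^n / n := hup
    _ ≤ 256 * ((2:ℝ)^(n-1-1) / ((n-1:ℕ):ℝ)) := hmid
    _ ≤ 256 * wittB (n-1) := by
        apply mul_le_mul_of_nonneg_left hlo (by norm_num)

/-- `limsup_{n → ∞} b_n / b_{n-1} ≥ 2`. -/
theorem stmt16 :
    2 ≤ Filter.limsup (fun n => wittB n / wittB (n - 1)) Filter.atTop := by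
  by_contra h
  push_neg at h
  set L := Filter.limsup (fun n => wittB n / wittB (n - 1)) Filter.atTop with hL
  set c : ℝ := max ((L + 2) / 2) (3/2) with hc
  have hc2 : c < 2 := by
    apply max_lt
    · linarith
    · norm_num
  have hcL : L < c := lt_of_lt_of_le (by linarith) (le_max_left _ _)
  have hc1 : (1:ℝ) < c := lt_of_lt_of_le (by norm_num) (le_max_right _ _)
  have hc0 : (0:ℝ) < c := by linarith
  have hbdd : Filter.IsBoundedUnder (· ≤ ·) Filter.atTop
      (fun n => wittB n / wittB (n - 1)) := by
    refine ⟨256, Filter.eventually_map.mpr ?_⟩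
    filter_upwards [Filter.eventually_ge_atTop 5] with n hn
    exact ratio_bounded hn
  have hev : ∀ᶠ n in Filter.atTop, wittB n / wittB (n - 1) < c :=
    Filter.eventually_lt_of_limsup_lt hcL hbdd
  obtain ⟨N0, hN0⟩ := Filter.eventually_atTop.mp hev
  obtain ⟨N, hN2, hNls⟩ : ∃ N, 2 ≤ N ∧ ∀ n ≥ N, wittB n / wittB (n - 1) < c :=
    ⟨N0 + 2, by omega, fun n hn => hN0 n (by omega)⟩
  -- geometric upper bound
  have hgeo : ∀ k : ℕ, wittB (N + k) ≤ wittB N * c ^ k := by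
    intro k
    induction k with
    | zero => simp
    | succ k ih =>
      have hlt := hNls (N + k + 1) (by omega)
      have hpos : 0 < wittB (N + k + 1 - 1) := wittB_pos (by omega)
      have hsub : N + k + 1 - 1 = N + k := by omega
      rw [hsub] at hlt hpos
      have h3 : wittB (N + k + 1) < c * wittB (N + k) := (div_lt_iff₀ hpos).mp hlt
      have h4 : c * wittB (N + k) ≤ c * (wittB N * c ^ k) :=
        mul_le_mul_of_nonneg_left ih hc0.le
      calc wittB (N + k + 1) ≤ c * (wittB N * c ^ k) := le_of_lt (lt_of_lt_of_le h3 h4)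
        _ = wittB N * c ^ (k + 1) := by ring
  -- the decaying sequence
  set r : ℝ := c / 2 with hr
  have hr0 : 0 < r := by positivity
  have hr1 : r < 1 := by rw [hr]; linarith
  have htend : Filter.Tendsto (fun m : ℕ => (m:ℝ) * r ^ m) Filter.atTop (nhds 0) := by
    have := tendsto_pow_const_mul_const_pow_of_lt_one 1 hr0.le hr1
    simpa using this
  have hBN : 0 < wittB N := wittB_pos (by omega)
  set ε : ℝ := c ^ N / (2 * wittB N) with hε
  have hε0 : 0 < ε := by positivity
  have hev2 : ∀ᶠ k : ℕ in Filter.atTop, (k:ℝ) * r ^ k < ε :=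
    htend.eventually (gt_mem_nhds hε0)
  obtain ⟨M, hM⟩ := Filter.eventually_atTop.mp hev2
  obtain ⟨m, hmN, hm4, hMm⟩ : ∃ m, N ≤ m ∧ 4 ≤ m ∧ (m:ℝ) * r ^ m < ε :=
    ⟨M + N + 4, by omega, by omega, hM _ (by omega)⟩
  -- lower bound on wittB m
  have hm0 : (0:ℝ) < m := by exact_mod_cast (by omega : 0 < m)
  have hlow : (2:ℝ)^(m-1) / m ≤ wittB m := wittB_lower hm4
  -- upper bound on wittB m
  have hup : wittB m ≤ wittB N * c ^ (m - N) := by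
    have := hgeo (m - N)
    rwa [Nat.add_sub_cancel' hmN] at this
  have hcpow : c ^ (m - N) = c ^ m / c ^ N := by
    rw [pow_sub₀ c (ne_of_gt hc0) hmN, div_eq_mul_inv]
  have hcm : c ^ m = 2 ^ m * r ^ m := by
    have hcr : c = 2 * r := by rw [hr]; ring
    rw [hcr, mul_pow]
  have h2m : (2:ℝ)^m = 2^(m-1) * 2 := by
    rw [← pow_succ]
    congr 1
    omega
  -- derive contradiction
  have key : ε ≤ (m:ℝ) * r ^ m := by
    have hchain : (2:ℝ)^(m-1) / m ≤ wittB N * (2 ^ m * r ^ m) / c ^ N := by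
      calc (2:ℝ)^(m-1) / m ≤ wittB m := hlow
        _ ≤ wittB N * c ^ (m - N) := hup
        _ = wittB N * (2 ^ m * r ^ m) / c ^ N := by rw [hcpow, hcm]; ring
    have hcN : (0:ℝ) < c ^ N := by positivity
    have h2m1 : (0:ℝ) < (2:ℝ)^(m-1) := by positivity
    have hrm : (0:ℝ) < r ^ m := pow_pos hr0 m
    rw [div_le_div_iff₀ hm0 hcN] at hchain
    rw [hε, div_le_iff₀ (by positivity)]
    nlinarith [hchain]
  linarith
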